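/- If at each time step the cost-to-go J_{t+1} is piecewise quadratic (a pointwise minimum of finitely many quadratic forms xᵀPx + q) and the architecture set 𝒮 is finite with each architecture S giving linear dynamics x⁺ = Ax + B_S u and quadratic stage cost xᵀQx + uᵀRu with R ≻ 0, then the Bellman backup J_t(x) = min over S ∈ 𝒮 and piece (P,q) of min_u [xᵀQx + uᵀRu + (Ax + B_S u)ᵀP(Ax + B_S u) + q] is again a pointwise minimum of finitely many quadratic forms, hence piecewise quadratic. -/

import Mathlib

open Matrix

private lemma conj_dot {n k : ℕ} (C : Matrix (Fin k) (Fin n) ℝ) (M : Matrix (Fin k) (Fin k) ℝ)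
    (v w : Fin n → ℝ) :
    v ⬝ᵥ (Cᵀ * M * C).mulVec w = (C.mulVec v) ⬝ᵥ M.mulVec (C.mulVec w) := by
  rw [← mulVec_mulVec, ← mulVec_mulVec, dotProduct_mulVec, vecMul_transpose]

private lemma sym_dot {n : ℕ} {N : Matrix (Fin n) (Fin n) ℝ} (hN : Nᵀ = N) (v w : Fin n → ℝ) :
    v ⬝ᵥ N.mulVec w = w ⬝ᵥ N.mulVec v := by
  conv_lhs => rw [← hN]
  rw [dotProduct_mulVec, vecMul_transpose, dotProduct_comm]

private lemma iInf_equiv_real {α β : Type*} (e : α ≃ β) (f : β → ℝ) :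
    ⨅ b, f b = ⨅ a, f (e a) := by
  have h : Set.range (f ∘ e) = Set.range f := e.surjective.range_comp f
  simp only [iInf]
  rw [← h]
  rfl

/-- Completing the square: the minimum over `u` of the per-architecture cost. -/
private lemma inner_min {n k : ℕ} (A Q : Matrix (Fin n) (Fin n) ℝ)
    (R : Matrix (Fin k) (Fin k) ℝ) (Bm : Matrix (Fin n) (Fin k) ℝ)
    (N : Matrix (Fin n) (Fin n) ℝ) (c : ℝ)
    (hR : R.PosDef) (hN : N.PosSemidef) (x : Fin n → ℝ) :
    ⨅ u : Fin k → ℝ,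
        (x ⬝ᵥ Q.mulVec x + u ⬝ᵥ R.mulVec u +
          (A.mulVec x + Bm.mulVec u) ⬝ᵥ N.mulVec (A.mulVec x + Bm.mulVec u) + c)
      = x ⬝ᵥ ((Q + Aᵀ * N * A -
          (Bmᵀ * N * A)ᵀ * (R + Bmᵀ * N * Bm)⁻¹ * (Bmᵀ * N * A)).mulVec x) + c := by
  have hNsym : Nᵀ = N := by
    rw [← conjTranspose_eq_transpose_of_trivial]; exact hN.isHermitian
  set M : Matrix (Fin k) (Fin k) ℝ := R + Bmᵀ * N * Bm with hMdef
  have hBNB : (Bmᵀ * N * Bm).PosSemidef := by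
    have := hN.conjTranspose_mul_mul_same Bm
    rwa [conjTranspose_eq_transpose_of_trivial] at this
  have hM : M.PosDef := hR.add_posSemidef hBNB
  have hMsym : Mᵀ = M := by
    rw [← conjTranspose_eq_transpose_of_trivial]; exact hM.isHermitian
  have hMinv : M * M⁻¹ = 1 := mul_nonsing_inv _ (isUnit_iff_isUnit_det _ |>.1 hM.isUnit)
  set b : Fin k → ℝ := (Bmᵀ * N * A).mulVec x with hbdef
  set u₀ : Fin k → ℝ := -(M⁻¹.mulVec b) with hu0
  have hMu₀ : M.mulVec u₀ = -b := by
    rw [hu0, mulVec_neg, mulVec_mulVec, hMinv, one_mulVec]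
  set f : (Fin k → ℝ) → ℝ := fun u =>
      x ⬝ᵥ Q.mulVec x + u ⬝ᵥ R.mulVec u +
        (A.mulVec x + Bm.mulVec u) ⬝ᵥ N.mulVec (A.mulVec x + Bm.mulVec u) + c with hf
  set V : ℝ := x ⬝ᵥ ((Q + Aᵀ * N * A -
      (Bmᵀ * N * A)ᵀ * (R + Bmᵀ * N * Bm)⁻¹ * (Bmᵀ * N * A)).mulVec x) + c with hV
  have h1 : ∀ u : Fin k → ℝ, u ⬝ᵥ b = (Bm.mulVec u) ⬝ᵥ N.mulVec (A.mulVec x) := by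
    intro u
    rw [hbdef, ← mulVec_mulVec, ← mulVec_mulVec, dotProduct_mulVec, vecMul_transpose]
  -- the completed-square identity
  have key : ∀ u : Fin k → ℝ, f u = (u - u₀) ⬝ᵥ M.mulVec (u - u₀) + V := by
    intro u
    have e1 : (u - u₀) ⬝ᵥ M.mulVec (u - u₀)
        = u ⬝ᵥ M.mulVec u - u ⬝ᵥ M.mulVec u₀ - u₀ ⬝ᵥ M.mulVec u + u₀ ⬝ᵥ M.mulVec u₀ := by
      simp only [sub_eq_add_neg, mulVec_add, mulVec_neg, dotProduct_add, add_dotProduct,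
        dotProduct_neg, neg_dotProduct, neg_neg]
      ring
    have e2 : u₀ ⬝ᵥ M.mulVec u = u ⬝ᵥ M.mulVec u₀ := sym_dot hMsym u₀ u
    have e3 : u ⬝ᵥ M.mulVec u₀ = -(u ⬝ᵥ b) := by rw [hMu₀, dotProduct_neg]
    have e4 : u₀ ⬝ᵥ M.mulVec u₀ = b ⬝ᵥ M⁻¹.mulVec b := by
      rw [hMu₀, dotProduct_neg, hu0, neg_dotProduct, neg_neg, dotProduct_comm]
    have e5 : u ⬝ᵥ M.mulVec u = u ⬝ᵥ R.mulVec u +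
        (Bm.mulVec u) ⬝ᵥ N.mulVec (Bm.mulVec u) := by
      rw [hMdef, add_mulVec, dotProduct_add, conj_dot]
    have e6 : x ⬝ᵥ ((Bmᵀ * N * A)ᵀ * M⁻¹ * (Bmᵀ * N * A)).mulVec x
        = b ⬝ᵥ M⁻¹.mulVec b := by rw [conj_dot, ← hbdef]
    have e7 : x ⬝ᵥ (Aᵀ * N * A).mulVec x = (A.mulVec x) ⬝ᵥ N.mulVec (A.mulVec x) :=
      conj_dot A N x x
    have e8 : (A.mulVec x) ⬝ᵥ N.mulVec (Bm.mulVec u)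
        = (Bm.mulVec u) ⬝ᵥ N.mulVec (A.mulVec x) := sym_dot hNsym _ _
    rw [e1, e2, e3, e4, hf, hV]
    simp only [dotProduct_add, mulVec_add, add_mulVec, add_dotProduct, sub_mulVec, dotProduct_sub, e5, e6,
      e7, e8, ← h1, ← hMdef]
    ring
  have hM0 : ∀ v : Fin k → ℝ, 0 ≤ v ⬝ᵥ M.mulVec v := by
    intro v
    have := hM.posSemidef.dotProduct_mulVec_nonneg v
    simpa using this
  have hlb : ∀ u, V ≤ f u := by
    intro u
    rw [key u]
    have := hM0 (u - u₀)
    linarith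
  have hfu₀ : f u₀ = V := by
    rw [key u₀]
    simp
  refine le_antisymm ?_ (le_ciInf hlb)
  have hbdd : BddBelow (Set.range f) := ⟨V, by rintro _ ⟨u, rfl⟩; exact hlb u⟩
  calc ⨅ u, f u ≤ f u₀ := ciInf_le hbdd u₀
    _ = V := hfu₀

/-- If `J_{t+1}` is a pointwise minimum of finitely many quadratics and each architecture
gives linear dynamics with quadratic cost, the Bellman backup is again a pointwise
minimum of finitely many quadratics, hence piecewise quadratic. -/
theorem bellman_backup_piecewise_quadratic {n k : ℕ}
    {σ ι : Type*} [Fintype σ] [Nonempty σ] [Fintype ι] [Nonempty ι]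
    (A : Matrix (Fin n) (Fin n) ℝ) (Q : Matrix (Fin n) (Fin n) ℝ)
    (R : Matrix (Fin k) (Fin k) ℝ)
    (B : σ → Matrix (Fin n) (Fin k) ℝ)
    (P : ι → Matrix (Fin n) (Fin n) ℝ) (q : ι → ℝ)
    (hQ : Q.PosSemidef) (hR : R.PosDef) (hP : ∀ i, (P i).PosSemidef) :
    ∃ (m : ℕ) (P' : Fin (m + 1) → Matrix (Fin n) (Fin n) ℝ) (q' : Fin (m + 1) → ℝ),
      ∀ x : Fin n → ℝ,
        (⨅ p : σ × ι, ⨅ u : Fin k → ℝ,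
            (x ⬝ᵥ Q.mulVec x + u ⬝ᵥ R.mulVec u +
              (A.mulVec x + (B p.1).mulVec u) ⬝ᵥ
                (P p.2).mulVec (A.mulVec x + (B p.1).mulVec u) + q p.2))
          = ⨅ j, x ⬝ᵥ (P' j).mulVec x + q' j := by
  obtain ⟨m, hm⟩ : ∃ m, Fintype.card (σ × ι) = m + 1 :=
    ⟨Fintype.card (σ × ι) - 1, (Nat.succ_pred_eq_of_pos Fintype.card_pos).symm⟩
  have e : Fin (m + 1) ≃ σ × ι := hm ▸ (Fintype.equivFin (σ × ι)).symm
  refine ⟨m,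
    fun j => Q + Aᵀ * (P (e j).2) * A -
      ((B (e j).1)ᵀ * (P (e j).2) * A)ᵀ *
        (R + (B (e j).1)ᵀ * (P (e j).2) * (B (e j).1))⁻¹ *
        ((B (e j).1)ᵀ * (P (e j).2) * A),
    fun j => q (e j).2, fun x => ?_⟩
  rw [iInf_equiv_real e]
  exact iInf_congr fun j => inner_min A Q R (B (e j).1) (P (e j).2) (q (e j).2) hR (hP _) x
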